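/- Cauchy analog of Joe's theorem. For n ≥ 1, let C(u) = 1/2 + arctan(u)/π be the standard Cauchy distribution function, and let B_C ⊆ ℝ^n be the set of Cauchy mean score sequences, i.e. B_C = { x : Fin n → ℝ | ∃ α : Fin n → ℝ, ∀ i, x i = ∑_{j ≠ i} C(α i − α j) }. Let M ⊆ ℝ^n be the set of mean score sequences of win-probability matrices of size n. Then the closure of B_C in ℝ^n equals M. -/

import Mathlib

set_option maxHeartbeats 2000000

/-- The standard Cauchy distribution function `C(u) = 1/2 + arctan(u)/π`. -/
noncomputable def cauchyC (u : ℝ) : ℝ := 1 / 2 + Real.arctan u / Real.pi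

/-- A win-probability matrix of size `n`. -/
def IsWinProbMatrix {n : ℕ} (p : Fin n → Fin n → ℝ) : Prop :=
  (∀ i j, 0 ≤ p i j ∧ p i j ≤ 1) ∧ ∀ i j, i ≠ j → p i j + p j i = 1

/-- Mean score sequence of a win-probability matrix. -/
def meanScore {n : ℕ} (p : Fin n → Fin n → ℝ) (i : Fin n) : ℝ :=
  ∑ j ∈ Finset.univ.filter (fun j => j ≠ i), p i j

open Real Filter


/-- Antiderivative of `arctan u / π`. -/
noncomputable def cauchyA (u : ℝ) : ℝ := (u * Real.arctan u - Real.log (1 + u ^ 2) / 2) / Real.pi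

lemma one_add_sq_pos (u : ℝ) : (0:ℝ) < 1 + u ^ 2 := by positivity

lemma hasDerivAt_cauchyA (u : ℝ) : HasDerivAt cauchyA (Real.arctan u / Real.pi) u := by
  have h1 : HasDerivAt (fun u : ℝ => u * Real.arctan u)
      (1 * Real.arctan u + u * (1 / (1 + u ^ 2))) u :=
    (hasDerivAt_id u).mul (Real.hasDerivAt_arctan u)
  have h2 : HasDerivAt (fun u : ℝ => 1 + u ^ 2) (0 + 2 * u) u := by
    refine ((hasDerivAt_pow 2 u).const_add (1:ℝ)).congr_deriv ?_; norm_num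
  have h3 : HasDerivAt (fun u : ℝ => Real.log (1 + u ^ 2)) ((0 + 2*u) / (1 + u ^ 2)) u := by
    have := (Real.hasDerivAt_log (one_add_sq_pos u).ne').comp u h2
    simpa [div_eq_inv_mul, mul_comm, Function.comp_def] using this
  have h4 : HasDerivAt (fun u : ℝ => u * Real.arctan u - Real.log (1 + u ^ 2) / 2)
      (1 * Real.arctan u + u * (1 / (1 + u ^ 2)) - (0 + 2*u) / (1 + u ^ 2) / 2) u :=
    h1.sub (h3.div_const 2)
  have := h4.div_const Real.pi
  refine this.congr_deriv ?_
  have h5 := (one_add_sq_pos u).ne'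
  field_simp
  ring

lemma continuous_cauchyA : Continuous cauchyA :=
  continuous_iff_continuousAt.2 fun u => (hasDerivAt_cauchyA u).continuousAt

lemma arctan_le_self {x : ℝ} (hx : 0 ≤ x) : Real.arctan x ≤ x := by
  calc Real.arctan x ≤ Real.tan (Real.arctan x) :=
        Real.le_tan (by simpa using Real.arctan_strictMono.monotone hx) (Real.arctan_lt_pi_div_two x)
    _ = x := Real.tan_arctan x

lemma log_one_add_le_two_sqrt {t : ℝ} (ht : 0 ≤ t) : Real.log (1 + t) ≤ 2 * Real.sqrt t := by
  have h1 : Real.log (1 + t) = 2 * Real.log (Real.sqrt (1 + t)) := by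
    rw [Real.log_sqrt (by linarith)]; ring
  have h2 : Real.log (Real.sqrt (1 + t)) ≤ Real.sqrt (1 + t) - 1 :=
    Real.log_le_sub_one_of_pos (Real.sqrt_pos.2 (by linarith))
  have h3 : Real.sqrt (1 + t) ≤ 1 + Real.sqrt t := by
    rw [show (1:ℝ) + t = 1 + t from rfl]
    have : Real.sqrt (1 + t) ≤ Real.sqrt ((1 + Real.sqrt t) ^ 2) := by
      apply Real.sqrt_le_sqrt
      have := Real.sq_sqrt ht
      nlinarith [Real.sqrt_nonneg t]
    simpa [Real.sqrt_sq (by positivity : (0:ℝ) ≤ 1 + Real.sqrt t)] using this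
  linarith

/-- main lower bound for `cauchyA`. -/
lemma cauchyA_lower (u : ℝ) :
    |u| / 2 - 1 / Real.pi - 2 * Real.sqrt |u| / Real.pi ≤ cauchyA u := by
  have hpi := Real.pi_pos
  -- u * arctan u ≥ π |u| / 2 - 1
  have h1 : Real.pi * |u| / 2 - 1 ≤ u * Real.arctan u := by
    rcases eq_or_ne u 0 with rfl | hu
    · simp
    · have habs : u * Real.arctan u = |u| * Real.arctan |u| := by
        rcases abs_cases u with ⟨h, _⟩ | ⟨h, _⟩
        · rw [h]
        · rw [h, Real.arctan_neg]; ring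
      have hupos : 0 < |u| := abs_pos.2 hu
      have hinv : Real.arctan |u|⁻¹ = Real.pi / 2 - Real.arctan |u| :=
        Real.arctan_inv_of_pos hupos
      have hle : Real.arctan |u|⁻¹ ≤ |u|⁻¹ := arctan_le_self (by positivity)
      have : Real.pi / 2 - |u|⁻¹ ≤ Real.arctan |u| := by linarith
      rw [habs]
      calc Real.pi * |u| / 2 - 1 = (Real.pi / 2 - |u|⁻¹) * |u| := by
            field_simp
        _ ≤ Real.arctan |u| * |u| := by
            apply mul_le_mul_of_nonneg_right this hupos.le
        _ = |u| * Real.arctan |u| := mul_comm _ _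
  -- log (1 + u^2) ≤ 4 √|u|
  have h2 : Real.log (1 + u ^ 2) ≤ 4 * Real.sqrt |u| := by
    have e1 : (1:ℝ) + u ^ 2 ≤ (1 + |u|) ^ 2 := by
      have := abs_nonneg u
      nlinarith [sq_abs u]
    have e2 : Real.log (1 + u ^ 2) ≤ Real.log ((1 + |u|) ^ 2) :=
      Real.log_le_log (by positivity) e1
    have e3 : Real.log ((1 + |u|) ^ 2) = 2 * Real.log (1 + |u|) := by
      rw [Real.log_pow]; push_cast; ring
    have e4 : Real.log (1 + |u|) ≤ 2 * Real.sqrt |u| := log_one_add_le_two_sqrt (abs_nonneg u)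
    linarith
  rw [cauchyA, le_div_iff₀ hpi]
  have key : (|u| / 2 - 1 / Real.pi - 2 * Real.sqrt |u| / Real.pi) * Real.pi
      = Real.pi * |u| / 2 - 1 - 2 * Real.sqrt |u| := by
    field_simp
  rw [key]
  linarith

lemma sum_antisymm {n : ℕ} (f : Fin n → Fin n → ℝ) (hf : ∀ i j, f i j = - f j i) :
    ∑ i, ∑ j, f i j = 0 := by
  have h : ∑ i, ∑ j, f i j = - ∑ i, ∑ j, f i j := by
    calc ∑ i, ∑ j, f i j = ∑ j, ∑ i, f i j := Finset.sum_comm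
      _ = ∑ j, ∑ i, (- f j i) := by
          refine Finset.sum_congr rfl fun j _ => Finset.sum_congr rfl fun i _ => hf i j
      _ = - ∑ i, ∑ j, f i j := by simp
  linarith


lemma cauchy_exists {n : ℕ} (hn : 1 ≤ n) (p : Fin n → Fin n → ℝ) (η : ℝ) (hη : 0 < η)
    (hlb : ∀ i j, i ≠ j → η ≤ p i j)
    (hsym : ∀ i j, i ≠ j → p i j + p j i = 1) :
    ∃ α : Fin n → ℝ, ∀ i,
      ∑ j ∈ Finset.univ.filter (fun j => j ≠ i), cauchyC (α i - α j)
        = ∑ j ∈ Finset.univ.filter (fun j => j ≠ i), p i j := by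
  have hpi := Real.pi_pos
  have hnR : (0:ℝ) < n := by exact_mod_cast hn
  -- the antisymmetric matrix q
  set q : Fin n → Fin n → ℝ := fun i j => if i = j then 0 else p i j - 1/2 with hq
  have hq_anti : ∀ i j, q i j = - q j i := by
    intro i j
    rcases eq_or_ne i j with rfl | hij
    · simp [hq]
    · have := hsym i j hij
      simp only [hq, if_neg hij, if_neg hij.symm]
      linarith
  have hq_bound : ∀ (i j) (β : Fin n → ℝ), q i j * (β i - β j) ≤ (1/2 - η) * |β i - β j| := by
    intro i j β
    rcases eq_or_ne i j with rfl | hij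
    · simp [hq]
    · set d := β i - β j
      have h1 := hlb i j hij
      have h2 := hlb j i hij.symm
      have h3 := hsym i j hij
      have habs : |q i j| ≤ 1/2 - η := by
        rw [abs_le]
        simp only [hq, if_neg hij]
        constructor <;> linarith
      calc q i j * d ≤ |q i j * d| := le_abs_self _
        _ = |q i j| * |d| := abs_mul _ _
        _ ≤ (1/2 - η) * |d| := by
            apply mul_le_mul_of_nonneg_right habs (abs_nonneg d)
  set c : Fin n → ℝ := fun i => ∑ j, q i j with hc
  have hcsum : ∑ i, c i = 0 := sum_antisymm q hq_anti
  -- the energy functional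
  set G : (Fin n → ℝ) → ℝ := fun α =>
    (1/2) * ∑ i, ∑ j, cauchyA (α i - α j) - ∑ i, c i * α i + (∑ i, α i)^2 with hG
  -- pointwise lower bound
  have hpt : ∀ d : ℝ, (η/4)*|d| - (1 + 1/η) ≤ (1/2) * cauchyA d - ((1/2)*(1/2-η))*|d| := by
    intro d
    have h1 := cauchyA_lower d
    have hs : Real.sqrt |d| ^ 2 = |d| := Real.sq_sqrt (abs_nonneg d)
    have hsn : 0 ≤ Real.sqrt |d| := Real.sqrt_nonneg _
    have hA : Real.sqrt |d| / Real.pi ≤ (η/4)*|d| + 1/η := by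
      have hq45 : (0:ℝ) ≤ η/4*|d| + 1/η := by positivity
      have h7 : 4*η*Real.sqrt |d| ≤ η^2*|d| + 4 := by
        nlinarith [sq_nonneg (η * Real.sqrt |d| - 2), hs]
      have h8 : Real.sqrt |d| ≤ η/4*|d| + 1/η := by
        rw [← sub_nonneg]
        have : η/4*|d| + 1/η - Real.sqrt |d| = (η^2*|d| + 4 - 4*η*Real.sqrt |d|) / (4*η) := by
          field_simp
        rw [this]
        exact div_nonneg (by linarith) (by positivity)
      rw [div_le_iff₀ hpi]
      calc Real.sqrt |d| ≤ η/4*|d| + 1/η := h8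
        _ ≤ (η/4*|d| + 1/η) * π := le_mul_of_one_le_right hq45 (by linarith [Real.pi_gt_three])
    have hpi1 : 1 / Real.pi ≤ 1 := by
      rw [div_le_one hpi]; linarith [Real.pi_gt_three]
    rw [mul_div_assoc] at h1
    linarith [h1, hA, hpi1]
  -- lower bound for the translation-invariant part
  have hFlow : ∀ β : Fin n → ℝ, (∑ i, β i = 0) →
      (η/4) * (n * ‖β‖) - n^2 * (1 + 1/η)
        ≤ (1/2) * ∑ i, ∑ j, cauchyA (β i - β j) - ∑ i, c i * β i := by
    intro β hβ
    -- linear term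
    have e0 : ∑ i, c i * β i = ∑ i, ∑ j, q i j * β i :=
      Finset.sum_congr rfl fun i _ => Finset.sum_mul _ _ _
    have e1 : ∑ i, ∑ j, q i j * β j = - ∑ i, ∑ j, q i j * β i := by
      calc ∑ i, ∑ j, q i j * β j = ∑ j, ∑ i, q i j * β j := Finset.sum_comm
        _ = ∑ j, ∑ i, (- (q j i * β j)) := by
            refine Finset.sum_congr rfl fun j _ => Finset.sum_congr rfl fun i _ => ?_
            rw [hq_anti i j]; ring
        _ = - ∑ j, ∑ i, q j i * β j := by simp
        _ = - ∑ i, ∑ j, q i j * β i := by rw [Finset.sum_comm]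
    have e2 : ∑ i, c i * β i = (1/2) * ∑ i, ∑ j, q i j * (β i - β j) := by
      have : ∑ i, ∑ j, q i j * (β i - β j)
          = ∑ i, ∑ j, q i j * β i - ∑ i, ∑ j, q i j * β j := by
        rw [← Finset.sum_sub_distrib]
        refine Finset.sum_congr rfl fun i _ => ?_
        rw [← Finset.sum_sub_distrib]
        refine Finset.sum_congr rfl fun j _ => by ring
      rw [this, e1, e0]; ring
    have e3 : ∑ i, c i * β i ≤ ((1/2)*(1/2-η)) * ∑ i, ∑ j, |β i - β j| := by
      rw [e2]
      have h9 : ∑ i, ∑ j, q i j * (β i - β j) ≤ (1/2-η) * ∑ i, ∑ j, |β i - β j| := by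
        rw [Finset.mul_sum]
        refine Finset.sum_le_sum fun i _ => ?_
        rw [Finset.mul_sum]
        exact Finset.sum_le_sum fun j _ => hq_bound i j β
      nlinarith [h9]
    -- norm bound
    have e4 : (n:ℝ) * ‖β‖ ≤ ∑ i, ∑ j, |β i - β j| := by
      have hRnn : (0:ℝ) ≤ ∑ i, ∑ j, |β i - β j| := by positivity
      have : ‖β‖ ≤ (∑ i, ∑ j, |β i - β j|) / n := by
        rw [pi_norm_le_iff_of_nonneg (by positivity)]
        intro i
        rw [Real.norm_eq_abs, le_div_iff₀ hnR]
        have h5 : β i * n = ∑ j : Fin n, (β i - β j) := by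
          rw [Finset.sum_sub_distrib, hβ, sub_zero, Finset.sum_const, Finset.card_univ,
            Fintype.card_fin, nsmul_eq_mul]
          ring
        calc |β i| * n = |β i * n| := by rw [abs_mul, abs_of_nonneg hnR.le]
          _ = |∑ j : Fin n, (β i - β j)| := by rw [h5]
          _ ≤ ∑ j : Fin n, |β i - β j| := Finset.abs_sum_le_sum_abs _ _
          _ ≤ ∑ i', ∑ j, |β i' - β j| :=
              Finset.single_le_sum (f := fun i' => ∑ j, |β i' - β j|)
                (fun i' _ => by positivity) (Finset.mem_univ i)
      calc (n:ℝ) * ‖β‖ ≤ n * ((∑ i, ∑ j, |β i - β j|) / n) := by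
            apply mul_le_mul_of_nonneg_left this hnR.le
        _ = ∑ i, ∑ j, |β i - β j| := by field_simp
    -- assemble
    have e5 : ∑ i, ∑ j, ((η/4)*|β i - β j| - (1 + 1/η))
        ≤ ∑ i, ∑ j, ((1/2) * cauchyA (β i - β j) - ((1/2)*(1/2-η))*|β i - β j|) :=
      Finset.sum_le_sum fun i _ => Finset.sum_le_sum fun j _ => hpt _
    have e6 : ∑ i, ∑ j, ((η/4)*|β i - β j| - (1 + 1/η))
        = (η/4) * (∑ i, ∑ j, |β i - β j|) - n^2 * (1 + 1/η) := by
      simp [Finset.sum_sub_distrib, ← Finset.mul_sum, Finset.sum_const, Finset.card_univ]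
      ring
    have e7 : ∑ i, ∑ j, ((1/2) * cauchyA (β i - β j) - ((1/2)*(1/2-η))*|β i - β j|)
        = (1/2) * ∑ i, ∑ j, cauchyA (β i - β j)
          - ((1/2)*(1/2-η)) * ∑ i, ∑ j, |β i - β j| := by
      simp [Finset.sum_sub_distrib, ← Finset.mul_sum]
    have e8 : (η/4) * (n * ‖β‖) ≤ (η/4) * ∑ i, ∑ j, |β i - β j| := by
      apply mul_le_mul_of_nonneg_left e4 (by positivity)
    rw [e6, e7] at e5
    linarith
  -- coercivity of G
  set μ : ℝ := η * n / 4 with hμ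
  have hμpos : 0 < μ := by positivity
  set K : ℝ := n^2 * (1 + 1/η) + μ^2/4 with hK
  have hcoer : ∀ α : Fin n → ℝ, μ * ‖α‖ - K ≤ G α := by
    intro α
    set S : ℝ := ∑ i, α i with hS
    set β : Fin n → ℝ := (fun i => α i - S / n) with hβdef
    have hβ0 : ∑ i, β i = 0 := by
      simp only [hβdef, Finset.sum_sub_distrib, Finset.sum_const, Finset.card_univ,
        Fintype.card_fin, nsmul_eq_mul, ← hS]
      field_simp
      ring
    have hlin : ∑ i, c i * α i = ∑ i, c i * β i := by
      have h1 : ∑ i, c i * α i - ∑ i, c i * β i = (S/n) * ∑ i, c i := by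
        rw [← Finset.sum_sub_distrib, Finset.mul_sum]
        refine Finset.sum_congr rfl fun i _ => ?_
        simp only [hβdef]
        ring
      rw [hcsum, mul_zero] at h1
      linarith
    have hGelem : G α = ((1/2) * ∑ i, ∑ j, cauchyA (β i - β j) - ∑ i, c i * β i) + S^2 := by
      simp only [hG, hlin, ← hS]
      congr 3
      refine Finset.sum_congr rfl fun i _ => Finset.sum_congr rfl fun j _ => ?_
      simp only [hβdef]
      ring_nf
    have hnormα : ‖α‖ ≤ ‖β‖ + |S| := by
      rw [pi_norm_le_iff_of_nonneg (by positivity)]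
      intro i
      have h1 : |β i| ≤ ‖β‖ := by
        rw [← Real.norm_eq_abs]
        exact norm_le_pi_norm β i
      have h2 : |S/(n:ℝ)| ≤ |S| := by
        rw [abs_div, abs_of_nonneg hnR.le]
        exact div_le_self (abs_nonneg S) (by exact_mod_cast hn)
      have h3 : α i = β i + S/n := by
        simp only [hβdef]
        ring
      rw [Real.norm_eq_abs, h3]
      calc |β i + S/n| ≤ |β i| + |S/(n:ℝ)| := abs_add_le _ _
        _ ≤ ‖β‖ + |S| := add_le_add h1 h2
    have hb := hFlow β hβ0
    have hnb : μ * ‖α‖ ≤ μ * (‖β‖ + |S|) := mul_le_mul_of_nonneg_left hnormα hμpos.le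
    have hsq : μ * |S| - S^2 ≤ μ^2/4 := by nlinarith [sq_nonneg (|S| - μ/2), sq_abs S]
    have hrw : (η/4) * ((n:ℝ) * ‖β‖) = μ * ‖β‖ := by rw [hμ]; ring
    rw [hGelem]
    rw [hrw] at hb
    nlinarith [hb, hnb, hsq]
  -- continuity of G
  have hGcont : Continuous G := by
    simp only [hG]
    refine Continuous.add (Continuous.sub ?_ ?_) ?_
    · exact continuous_const.mul (continuous_finset_sum _ fun i _ =>
        continuous_finset_sum _ fun j _ =>
          continuous_cauchyA.comp ((continuous_apply i).sub (continuous_apply j)))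
    · exact continuous_finset_sum _ fun i _ => continuous_const.mul (continuous_apply i)
    · exact (continuous_finset_sum _ fun i _ => continuous_apply i).pow 2
  have hGten : Tendsto G (cocompact (Fin n → ℝ)) atTop := by
    refine tendsto_atTop_mono hcoer ?_
    have h1 : Tendsto (fun t : ℝ => μ * t - K) atTop atTop := by
      have h2 : Tendsto (fun t : ℝ => μ * t) atTop atTop :=
        Tendsto.const_mul_atTop hμpos tendsto_id
      simpa [sub_eq_add_neg] using tendsto_atTop_add_const_right atTop (-K) h2
    exact h1.comp tendsto_norm_cocompact_atTop
  obtain ⟨α, hmin⟩ := hGcont.exists_forall_le hGten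
  -- Euler–Lagrange equations
  have hkey : ∀ k, (∑ j, Real.arctan (α k - α j) / Real.pi) - c k + 2 * (∑ i, α i) = 0 := by
    intro k
    set e : Fin n → ℝ := (fun i => if i = k then 1 else 0) with he
    set v : Fin n → ℝ := Pi.single k (1:ℝ) with hv
    have hinner : ∀ (i j : Fin n),
        HasDerivAt (fun s : ℝ => (α i + s * e i) - (α j + s * e j)) (e i - e j) 0 :=
      fun i j => ((hasDerivAt_mul_const (e i)).const_add (α i)).sub
        ((hasDerivAt_mul_const (e j)).const_add (α j))
    have hAd : ∀ i j : Fin n,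
        HasDerivAt (fun s : ℝ => cauchyA ((α i + s * e i) - (α j + s * e j)))
          ((Real.arctan (α i - α j) / Real.pi) * (e i - e j)) 0 := by
      intro i j
      have h := (hasDerivAt_cauchyA ((α i + 0 * e i) - (α j + 0 * e j))).comp 0 (hinner i j)
      simpa [Function.comp_def] using h
    have hsum1 : HasDerivAt
        (fun s : ℝ => ∑ i, ∑ j, cauchyA ((α i + s * e i) - (α j + s * e j)))
        (∑ i, ∑ j, (Real.arctan (α i - α j) / Real.pi) * (e i - e j)) 0 :=
      HasDerivAt.fun_sum fun i _ => HasDerivAt.fun_sum fun j _ => hAd i j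
    have hlin : HasDerivAt (fun s : ℝ => ∑ i, c i * (α i + s * e i)) (∑ i, c i * e i) 0 :=
      HasDerivAt.fun_sum fun i _ => ((hasDerivAt_mul_const (e i)).const_add (α i)).const_mul (c i)
    have hssum : HasDerivAt (fun s : ℝ => ∑ i, (α i + s * e i)) (∑ i, e i) 0 :=
      HasDerivAt.fun_sum fun i _ => (hasDerivAt_mul_const (e i)).const_add (α i)
    have hsq := hssum.fun_pow 2
    have htotal := ((hsum1.const_mul (1/2 : ℝ)).fun_sub hlin).fun_add hsq
    have hcoord : ∀ (s : ℝ) (i : Fin n), (α + s • v) i = α i + s * e i := by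
      intro s i
      simp [he, hv, Pi.single_apply]
    have hfun : (fun s : ℝ => 1/2 * (∑ i, ∑ j, cauchyA ((α i + s * e i) - (α j + s * e j)))
          - ∑ i, c i * (α i + s * e i) + (∑ i, (α i + s * e i))^2)
        = fun s : ℝ => G (α + s • v) := by
      funext s
      simp only [hG, hcoord]
    rw [hfun] at htotal
    have hlocmin : IsLocalMin (fun s : ℝ => G (α + s • v)) 0 := by
      refine Filter.Eventually.of_forall fun s => ?_
      have h0 : α + (0:ℝ) • v = α := by simp
      simpa [h0] using hmin (α + s • v)
    have hzero := hlocmin.hasDerivAt_eq_zero htotal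
    -- simplify the derivative expression
    have hsume : ∑ i, e i = 1 := by simp [he]
    have hce : ∑ i, c i * e i = c k := by simp [he, mul_ite]
    have hdd : ∑ i, ∑ j, (Real.arctan (α i - α j) / Real.pi) * (e i - e j)
        = 2 * ∑ j, Real.arctan (α k - α j) / Real.pi := by
      have h1 : ∑ i, ∑ j, (Real.arctan (α i - α j) / Real.pi) * (e i - e j)
          = ∑ i, ∑ j, ((Real.arctan (α i - α j) / Real.pi) * e i
              - (Real.arctan (α i - α j) / Real.pi) * e j) := by
        refine Finset.sum_congr rfl fun i _ => Finset.sum_congr rfl fun j _ => by ring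
      have h2 : ∑ i, ∑ j, (Real.arctan (α i - α j) / Real.pi) * e i
          = ∑ j, Real.arctan (α k - α j) / Real.pi := by
        have : ∀ i, ∑ j, (Real.arctan (α i - α j) / Real.pi) * e i
            = (∑ j, Real.arctan (α i - α j) / Real.pi) * e i :=
          fun i => (Finset.sum_mul _ _ _).symm
        rw [Finset.sum_congr rfl fun i _ => this i]
        simp [he, mul_ite]
      have h3 : ∑ i, ∑ j, (Real.arctan (α i - α j) / Real.pi) * e j
          = - ∑ j, Real.arctan (α k - α j) / Real.pi := by
        rw [Finset.sum_comm]
        have : ∀ j, ∑ i, (Real.arctan (α i - α j) / Real.pi) * e j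
            = (∑ i, Real.arctan (α i - α j) / Real.pi) * e j :=
          fun j => (Finset.sum_mul _ _ _).symm
        rw [Finset.sum_congr rfl fun j _ => this j]
        have h4 : ∑ i, Real.arctan (α i - α k) / Real.pi
            = - ∑ j, Real.arctan (α k - α j) / Real.pi := by
          rw [← Finset.sum_neg_distrib]
          refine Finset.sum_congr rfl fun i _ => ?_
          rw [← neg_sub, Real.arctan_neg]
          ring
        simp [he, mul_ite, h4]
      rw [h1]
      have h5 : ∑ i, ∑ j, ((Real.arctan (α i - α j) / Real.pi) * e i
          - (Real.arctan (α i - α j) / Real.pi) * e j)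
          = ∑ i, ∑ j, (Real.arctan (α i - α j) / Real.pi) * e i
            - ∑ i, ∑ j, (Real.arctan (α i - α j) / Real.pi) * e j := by
        rw [← Finset.sum_sub_distrib]
        exact Finset.sum_congr rfl fun i _ => (Finset.sum_sub_distrib _ _).symm |>.symm
      rw [h5, h2, h3]
      ring
    rw [hdd, hce, hsume] at hzero
    simp only [mul_one, zero_mul, add_zero, pow_one, Nat.cast_ofNat] at hzero
    linarith [hzero]
  -- sum the equations to find the total is zero
  have hT0 : ∑ i, ∑ j, Real.arctan (α i - α j) / Real.pi = 0 := by
    refine sum_antisymm _ fun i j => ?_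
    rw [← neg_sub (α j) (α i), Real.arctan_neg]
    ring
  have hS0 : ∑ i, α i = 0 := by
    have h1 : ∑ k, ((∑ j, Real.arctan (α k - α j) / Real.pi) - c k + 2 * (∑ i, α i)) = 0 :=
      Finset.sum_eq_zero fun k _ => hkey k
    rw [Finset.sum_add_distrib, Finset.sum_sub_distrib, hT0, hcsum, Finset.sum_const,
      Finset.card_univ, Fintype.card_fin, nsmul_eq_mul] at h1
    have h2 : (n:ℝ) * (2 * ∑ i, α i) = 0 := by linarith
    rcases mul_eq_zero.1 h2 with h | h
    · exact absurd h hnR.ne'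
    · linarith
  have hkey2 : ∀ k, ∑ j, Real.arctan (α k - α j) / Real.pi = c k := by
    intro k
    have := hkey k
    rw [hS0] at this
    linarith
  -- conclusion
  refine ⟨α, fun i => ?_⟩
  have hfilter : Finset.univ.filter (fun j => j ≠ i) = Finset.univ.erase i := by
    ext j
    simp [Finset.mem_erase, and_comm]
  have htsum : ∑ j ∈ Finset.univ.erase i, Real.arctan (α i - α j) / Real.pi = c i := by
    have h := Finset.sum_erase_add Finset.univ
      (fun j => Real.arctan (α i - α j) / Real.pi) (Finset.mem_univ i)
    simp only [sub_self, Real.arctan_zero, zero_div, add_zero] at h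
    rw [h, hkey2 i]
  have hqsum : ∑ j ∈ Finset.univ.erase i, q i j = c i := by
    have h := Finset.sum_erase_add Finset.univ (fun j => q i j) (Finset.mem_univ i)
    have hq0 : q i i = 0 := by simp [hq]
    simp only [hq0, add_zero] at h
    rw [h]
  rw [hfilter]
  calc ∑ j ∈ Finset.univ.erase i, cauchyC (α i - α j)
      = ∑ j ∈ Finset.univ.erase i, (1/2 + Real.arctan (α i - α j) / Real.pi) := rfl
    _ = (Finset.univ.erase i).card • (1/2 : ℝ)
        + ∑ j ∈ Finset.univ.erase i, Real.arctan (α i - α j) / Real.pi := by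
        rw [Finset.sum_add_distrib, Finset.sum_const]
    _ = (Finset.univ.erase i).card • (1/2 : ℝ) + ∑ j ∈ Finset.univ.erase i, q i j := by
        rw [htsum, hqsum]
    _ = ∑ j ∈ Finset.univ.erase i, (1/2 + q i j) := by
        rw [Finset.sum_add_distrib, Finset.sum_const]
    _ = ∑ j ∈ Finset.univ.erase i, p i j := by
        refine Finset.sum_congr rfl fun j hj => ?_
        have hji : ¬ (i = j) := fun h => (Finset.mem_erase.1 hj).1 h.symm
        simp only [hq, if_neg hji]
        ring

lemma cauchyC_mem_unit (u : ℝ) : 0 ≤ cauchyC u ∧ cauchyC u ≤ 1 := by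
  have hpi := Real.pi_pos
  have h1 := Real.neg_pi_div_two_lt_arctan u
  have h2 := Real.arctan_lt_pi_div_two u
  constructor
  · rw [cauchyC]
    have : -(1/2 : ℝ) ≤ Real.arctan u / Real.pi := by
      rw [neg_le, ← neg_div, div_le_iff₀ hpi]
      nlinarith
    linarith
  · rw [cauchyC]
    have : Real.arctan u / Real.pi ≤ 1/2 := by
      rw [div_le_iff₀ hpi]
      nlinarith
    linarith

lemma cauchyC_add (u : ℝ) : cauchyC u + cauchyC (-u) = 1 := by
  have hpi := Real.pi_pos
  rw [cauchyC, cauchyC, Real.arctan_neg]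
  field_simp
  ring

/-- Cauchy analog of Joe's theorem: the closure of the set of Cauchy mean
score sequences is the set of all mean score sequences. -/
theorem cauchy_joe_theorem (n : ℕ) (hn : 1 ≤ n) :
    closure { x : Fin n → ℝ | ∃ α : Fin n → ℝ, ∀ i,
        x i = ∑ j ∈ Finset.univ.filter (fun j => j ≠ i), cauchyC (α i - α j) }
      = { x : Fin n → ℝ | ∃ p : Fin n → Fin n → ℝ,
            IsWinProbMatrix p ∧ ∀ i, x i = meanScore p i } := by
  apply Set.Subset.antisymm
  · -- easy direction: the RHS is closed and contains the Cauchy sequences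
    have hBM : { x : Fin n → ℝ | ∃ α : Fin n → ℝ, ∀ i,
        x i = ∑ j ∈ Finset.univ.filter (fun j => j ≠ i), cauchyC (α i - α j) }
        ⊆ { x : Fin n → ℝ | ∃ p : Fin n → Fin n → ℝ,
            IsWinProbMatrix p ∧ ∀ i, x i = meanScore p i } := by
      rintro x ⟨α, hα⟩
      refine ⟨fun i j => cauchyC (α i - α j), ⟨fun i j => cauchyC_mem_unit _, fun i j _ => ?_⟩,
        fun i => ?_⟩
      · show cauchyC (α i - α j) + cauchyC (α j - α i) = 1
        rw [show α j - α i = -(α i - α j) by ring]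
        exact cauchyC_add _
      · rw [meanScore]
        exact hα i
    have hMeq : { x : Fin n → ℝ | ∃ p : Fin n → Fin n → ℝ,
            IsWinProbMatrix p ∧ ∀ i, x i = meanScore p i }
        = meanScore '' {p : Fin n → Fin n → ℝ | IsWinProbMatrix p} := by
      ext x
      constructor
      · rintro ⟨p, hp, hxp⟩
        exact ⟨p, hp, (funext fun i => (hxp i).symm)⟩
      · rintro ⟨p, hp, rfl⟩
        exact ⟨p, hp, fun i => rfl⟩
    have hKc : IsCompact {p : Fin n → Fin n → ℝ | IsWinProbMatrix p} := by
      refine (isCompact_closedBall (0 : Fin n → Fin n → ℝ) 1).of_isClosed_subset ?_ ?_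
      · have heq : {p : Fin n → Fin n → ℝ | IsWinProbMatrix p}
            = (⋂ i, ⋂ j, {p : Fin n → Fin n → ℝ | 0 ≤ p i j ∧ p i j ≤ 1}) ∩
              (⋂ i, ⋂ j, ⋂ (_ : i ≠ j), {p : Fin n → Fin n → ℝ | p i j + p j i = 1}) := by
          ext p
          simp only [IsWinProbMatrix, Set.mem_setOf_eq, Set.mem_inter_iff, Set.mem_iInter]
        rw [heq]
        have hc : ∀ i j : Fin n, Continuous fun p : Fin n → Fin n → ℝ => p i j :=
          fun i j => (continuous_apply j).comp (continuous_apply i)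
        refine IsClosed.inter (isClosed_iInter fun i => isClosed_iInter fun j => ?_)
          (isClosed_iInter fun i => isClosed_iInter fun j => isClosed_iInter fun hij => ?_)
        · exact IsClosed.inter (isClosed_le continuous_const (hc i j))
            (isClosed_le (hc i j) continuous_const)
        · exact isClosed_eq ((hc i j).add (hc j i)) continuous_const
      · intro p hp
        rw [Metric.mem_closedBall, dist_zero_right]
        rw [pi_norm_le_iff_of_nonneg zero_le_one]
        intro i
        rw [pi_norm_le_iff_of_nonneg zero_le_one]
        intro j
        rw [Real.norm_eq_abs, abs_le]
        exact ⟨by linarith [(hp.1 i j).1], (hp.1 i j).2⟩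
    have hL : Continuous (meanScore : (Fin n → Fin n → ℝ) → (Fin n → ℝ)) := by
      refine continuous_pi fun i => ?_
      have : (fun p : Fin n → Fin n → ℝ => meanScore p i)
          = fun p : Fin n → Fin n → ℝ => ∑ j ∈ Finset.univ.filter (fun j => j ≠ i), p i j :=
        rfl
      rw [this]
      exact continuous_finset_sum _ fun j _ => (continuous_apply j).comp (continuous_apply i)
    have hMclosed : IsClosed { x : Fin n → ℝ | ∃ p : Fin n → Fin n → ℝ,
            IsWinProbMatrix p ∧ ∀ i, x i = meanScore p i } := by
      rw [hMeq]
      exact (hKc.image hL).isClosed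
    exact closure_minimal hBM hMclosed
  · -- hard direction: every mean score sequence is a limit of Cauchy ones
    rintro x ⟨p, hp, hxp⟩
    rw [Metric.mem_closure_iff]
    intro ε hε
    set t : ℝ := min (ε / (n + 1)) (1/2) with ht
    have htpos : 0 < t := by
      apply lt_min
      · positivity
      · norm_num
    have ht1 : t ≤ 1/2 := min_le_right _ _
    have htε : t * n < ε := by
      have h1 : t ≤ ε / (n + 1) := min_le_left _ _
      have h2 : (0:ℝ) < n + 1 := by positivity
      have h3 : t * n ≤ ε / (n + 1) * n := by
        apply mul_le_mul_of_nonneg_right h1 (by positivity)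
      have h4 : ε / (n + 1) * n < ε := by
        rw [div_mul_eq_mul_div, div_lt_iff₀ h2]
        nlinarith
      linarith
    set p' : Fin n → Fin n → ℝ := fun i j => (1 - t) * p i j + t/2 with hp'
    have h1 : ∀ i j : Fin n, i ≠ j → t/2 ≤ p' i j := by
      intro i j _
      have := (hp.1 i j).1
      have h5 : 0 ≤ (1 - t) * p i j := mul_nonneg (by linarith) this
      simp only [hp']
      linarith
    have h2 : ∀ i j : Fin n, i ≠ j → p' i j + p' j i = 1 := by
      intro i j hij
      simp only [hp']
      calc (1 - t) * p i j + t/2 + ((1 - t) * p j i + t/2)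
          = (1 - t) * (p i j + p j i) + t := by ring
        _ = 1 := by rw [hp.2 i j hij]; ring
    obtain ⟨α, hα⟩ := cauchy_exists hn p' (t/2) (by positivity) h1 h2
    set y : Fin n → ℝ := fun i => ∑ j ∈ Finset.univ.filter (fun j => j ≠ i), cauchyC (α i - α j)
      with hy
    refine ⟨y, ⟨α, fun i => rfl⟩, ?_⟩
    rw [dist_pi_lt_iff hε]
    intro i
    rw [Real.dist_eq]
    have hxi : x i = ∑ j ∈ Finset.univ.filter (fun j => j ≠ i), p i j := hxp i
    have hyi : y i = ∑ j ∈ Finset.univ.filter (fun j => j ≠ i), ((1 - t) * p i j + t/2) := hα i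
    have hdiff : x i - y i = ∑ j ∈ Finset.univ.filter (fun j => j ≠ i), (t * (p i j - 1/2)) := by
      rw [hxi, hyi, ← Finset.sum_sub_distrib]
      exact Finset.sum_congr rfl fun j _ => by ring
    have hbound : |x i - y i| ≤ t * n := by
      rw [hdiff]
      calc |∑ j ∈ Finset.univ.filter (fun j => j ≠ i), (t * (p i j - 1/2))|
          ≤ ∑ j ∈ Finset.univ.filter (fun j => j ≠ i), |t * (p i j - 1/2)| :=
            Finset.abs_sum_le_sum_abs _ _
        _ ≤ ∑ j ∈ Finset.univ.filter (fun j => j ≠ i), t := by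
            refine Finset.sum_le_sum fun j _ => ?_
            rw [abs_mul, abs_of_nonneg htpos.le]
            have h6 : |p i j - 1/2| ≤ 1 := by
              rw [abs_le]
              constructor
              · linarith [(hp.1 i j).1]
              · linarith [(hp.1 i j).2]
            nlinarith [htpos.le]
        _ = (Finset.univ.filter (fun j => j ≠ i)).card * t := by
            rw [Finset.sum_const, nsmul_eq_mul]
        _ ≤ t * n := by
            have h7 : (Finset.univ.filter (fun j => j ≠ i)).card ≤ n := by
              calc (Finset.univ.filter (fun j => j ≠ i)).card
                  ≤ (Finset.univ : Finset (Fin n)).card := Finset.card_filter_le _ _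
                _ = n := by simp
            have h8 : ((Finset.univ.filter (fun j => j ≠ i)).card : ℝ) ≤ n := by
              exact_mod_cast h7
            nlinarith [htpos.le]
    linarith
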